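/- arXiv:2003.02992 — 2 statements merged into one kernel-verified Lean document; each statement's English description precedes it below -/
import Mathlib

section
/- Let m > 0, let K and Λ be symmetric positive definite 3×3 real matrices with smallest eigenvalues λ_K > 0 and λ_Λ > 0 respectively, and let d_m ≥ 0. Let p̃ : [0,∞) → ℝ³ be twice continuously differentiable (the position tracking error), let q(t) = ∫₀ᵗ p̃(τ) dτ, and define the composite variable s(t) = p̃'(t) + 2Λ p̃(t) + Λ² q(t). Suppose the closed-loop dynamics satisfy m s'(t) = −K s(t) + ε₀ + ε(t) for all t ≥ 0, where ε₀ ∈ ℝ³ is a constant vector and ε : [0,∞) → ℝ³ is continuously differentiable with ‖ε'(t)‖ ≤ d_m for all t ≥ 0. Then the tracking error converges exponentially to an error ball: limsup_{t→∞} ‖p̃(t)‖ ≤ d_m / (λ_Λ² · λ_K). -/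
open scoped RealInnerProductSpace

set_option maxHeartbeats 1000000

open Filter in
lemma eventually_nonpos_of_decay (h : ℝ → ℝ) (T κ : ℝ) (hκ : 0 < κ)
    (hdiff : ∀ t, T ≤ t → DifferentiableAt ℝ h t)
    (hder : ∀ t, T ≤ t → 0 ≤ h t → deriv h t ≤ -κ) :
    ∀ᶠ t in atTop, h t ≤ 0 := by
  have hcont : ContinuousOn h (Set.Ici T) := fun t ht =>
    ((hdiff t ht).continuousAt).continuousWithinAt
  -- Step B: h hits 0
  have hB : ∃ t₁, T ≤ t₁ ∧ h t₁ ≤ 0 := by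
    by_contra hcon
    push_neg at hcon
    have hpos : ∀ t, T ≤ t → 0 < h t := fun t ht => hcon t ht
    set φ : ℝ → ℝ := fun t => h t + κ * t with hφ
    have hφdiff : ∀ t, T ≤ t → HasDerivAt φ (deriv h t + κ * 1) t := fun t ht =>
      (hdiff t ht).hasDerivAt.add ((hasDerivAt_id t).const_mul κ)
    have hanti : AntitoneOn φ (Set.Ici T) := by
      apply antitoneOn_of_deriv_nonpos (convex_Ici T)
      · exact fun t ht => ((hφdiff t ht).differentiableAt.continuousAt).continuousWithinAt
      · rw [interior_Ici]
        exact fun t ht => (hφdiff t (le_of_lt ht)).differentiableAt.differentiableWithinAt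
      · rw [interior_Ici]
        intro t ht
        rw [(hφdiff t ht.le).deriv]
        have := hder t ht.le (hpos t ht.le).le
        linarith
    set t₂ := T + h T / κ + 1 with ht₂
    have hdivnn : 0 ≤ h T / κ := div_nonneg (hpos T le_rfl).le hκ.le
    have hT2 : T ≤ t₂ := by rw [ht₂]; linarith
    have hle := hanti (Set.mem_Ici.2 le_rfl) (Set.mem_Ici.2 hT2) hT2
    have hht2 : h t₂ + κ * (T + h T / κ + 1) ≤ h T + κ * T := by
      simpa [hφ, ht₂] using hle
    rw [mul_add, mul_add, mul_div_cancel₀ _ hκ.ne'] at hht2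
    have := hpos t₂ hT2
    linarith
  obtain ⟨t₁, ht₁T, ht₁⟩ := hB
  -- Step A: stays nonpositive
  rw [eventually_atTop]
  refine ⟨t₁, fun t₂ ht₂ => ?_⟩
  by_contra hcon
  push_neg at hcon
  have ht12 : t₁ < t₂ := by
    rcases lt_or_eq_of_le ht₂ with h' | h'
    · exact h'
    · exfalso; rw [← h'] at hcon; linarith
  set S := {t | t ∈ Set.Icc t₁ t₂ ∧ h t ≤ 0} with hS
  have hScl : IsClosed S := by
    have heq : S = Set.Icc t₁ t₂ ∩ h ⁻¹' (Set.Iic 0) := by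
      ext t; simp [hS, Set.mem_Icc, and_assoc]
    rw [heq]
    exact (hcont.mono (fun t ht => le_trans ht₁T ht.1)).preimage_isClosed_of_isClosed
      isClosed_Icc isClosed_Iic
  have hSne : S.Nonempty := ⟨t₁, ⟨le_rfl, ht12.le⟩, ht₁⟩
  have hSbdd : BddAbove S := ⟨t₂, fun t ht => ht.1.2⟩
  set ts := sSup S with hts
  have htsS : ts ∈ S := hScl.csSup_mem hSne hSbdd
  have htsne : ts ≠ t₂ := by
    intro he
    have := htsS.2
    rw [he] at this
    linarith
  have hts2 : ts < t₂ := lt_of_le_of_ne htsS.1.2 htsne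
  have hts1 : t₁ ≤ ts := htsS.1.1
  have hmid : ∀ u, ts < u → u ≤ t₂ → 0 < h u := by
    intro u hu1 hu2
    by_contra hc; push_neg at hc
    have : u ∈ S := ⟨⟨hts1.trans hu1.le, hu2⟩, hc⟩
    exact absurd (le_csSup hSbdd this) (not_le.2 hu1)
  have hanti : AntitoneOn h (Set.Icc ts t₂) := by
    apply antitoneOn_of_deriv_nonpos (convex_Icc ts t₂)
    · exact hcont.mono (fun u hu => le_trans (ht₁T.trans hts1) hu.1)
    · rw [interior_Icc]
      exact fun u hu =>
        (hdiff u (le_trans (ht₁T.trans hts1) hu.1.le)).differentiableWithinAt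
    · rw [interior_Icc]
      intro u hu
      have hT : T ≤ u := le_trans (ht₁T.trans hts1) hu.1.le
      have := hder u hT (hmid u hu.1 hu.2.le).le
      linarith
  have := hanti (Set.mem_Icc.2 ⟨le_rfl, hts2.le⟩) (Set.mem_Icc.2 ⟨hts2.le, le_rfl⟩) hts2.le
  linarith [htsS.2]

open Filter in
lemma iss_helper (α c δ : ℝ) (hα : 0 < α) (hc : 0 ≤ c) (hδ : 0 < δ)
    (x u : ℝ → EuclideanSpace ℝ (Fin 3))
    (L : EuclideanSpace ℝ (Fin 3) →L[ℝ] EuclideanSpace ℝ (Fin 3))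
    (hL : ∀ y, α * ‖y‖ ^ 2 ≤ ⟪L y, y⟫)
    (hx : ∀ᶠ t in atTop, HasDerivAt x (-(L (x t)) + u t) t)
    (hu : ∀ᶠ t in atTop, ‖u t‖ ≤ c) :
    ∀ᶠ t in atTop, ‖x t‖ ≤ c / α + δ := by
  set R := c / α + δ with hR
  have hRpos : 0 < R := by positivity
  obtain ⟨T, hT⟩ := eventually_atTop.1 (hx.and hu)
  set h : ℝ → ℝ := fun t => ⟪x t, x t⟫ - R ^ 2 with hh
  have hder : ∀ t, T ≤ t →
      HasDerivAt h (⟪x t, -(L (x t)) + u t⟫ + ⟪-(L (x t)) + u t, x t⟫) t := by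
    intro t ht
    exact (((hT t ht).1.inner ℝ (hT t ht).1)).sub_const _
  have hkey : ∀ᶠ t in atTop, h t ≤ 0 := by
    apply eventually_nonpos_of_decay h T (2 * α * δ * R) (by positivity)
    · exact fun t ht => (hder t ht).differentiableAt
    · intro t ht hht
      rw [(hder t ht).deriv]
      have hn : R ≤ ‖x t‖ := by
        have h1 : R ^ 2 ≤ ‖x t‖ ^ 2 := by
          have := hht
          simp only [hh] at this
          rw [real_inner_self_eq_norm_sq] at this
          linarith
        nlinarith [norm_nonneg (x t), hRpos]
      have hinner : ⟪x t, -(L (x t)) + u t⟫ ≤ -α * ‖x t‖ ^ 2 + ‖x t‖ * c := by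
        rw [inner_add_right, inner_neg_right]
        have h1 : α * ‖x t‖ ^ 2 ≤ ⟪x t, L (x t)⟫ := by
          rw [real_inner_comm]; exact hL (x t)
        have h2 : ⟪x t, u t⟫ ≤ ‖x t‖ * c := by
          calc ⟪x t, u t⟫ ≤ ‖x t‖ * ‖u t‖ := real_inner_le_norm _ _
            _ ≤ ‖x t‖ * c := by
                exact mul_le_mul_of_nonneg_left (hT t ht).2 (norm_nonneg _)
        linarith
      have hsym : ⟪-(L (x t)) + u t, x t⟫ = ⟪x t, -(L (x t)) + u t⟫ :=
        real_inner_comm _ _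
      rw [hsym]
      have hcR : c = α * (R - δ) := by
        rw [hR]; field_simp; ring
      nlinarith [hn, hRpos, norm_nonneg (x t), mul_nonneg (mul_nonneg hα.le hδ.le) (sub_nonneg.2 hn), mul_nonneg (mul_nonneg hα.le (le_trans hRpos.le hn)) (sub_nonneg.2 hn)]
  filter_upwards [hkey] with t ht
  simp only [hh] at ht
  rw [real_inner_self_eq_norm_sq] at ht
  nlinarith [norm_nonneg (x t), hRpos]

open Filter in
/-- **Theorem 1 of the paper** (tracking error bound for the Neural-Swarm position
controller).  With composite variable `s = pt' + 2Λpt + Λ²∫pt` satisfying the closed-loop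
dynamics `m ṡ = -K s + ε₀ + ε(t)` with `‖ε̇‖ ≤ d_m`, the tracking error converges
exponentially to the error ball `d_m / (λ_min(Λ)² λ_min(K))`. -/
theorem neural_swarm_tracking_error_bound
    (m : ℝ) (hm : 0 < m)
    (K Λ : Matrix (Fin 3) (Fin 3) ℝ)
    (hKpd : K.PosDef) (hΛpd : Λ.PosDef)
    (lamK lamΛ : ℝ) (hlamK : 0 < lamK) (hlamΛ : 0 < lamΛ)
    -- `lamK` and `lamΛ` are the smallest eigenvalues of `K` and `Λ`:
    -- they lower-bound the quadratic forms and are attained by eigenvectors.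
    (hKlow : ∀ x : EuclideanSpace ℝ (Fin 3), lamK * ‖x‖ ^ 2 ≤ ⟪Matrix.toEuclideanLin K x, x⟫)
    (hΛlow : ∀ x : EuclideanSpace ℝ (Fin 3), lamΛ * ‖x‖ ^ 2 ≤ ⟪Matrix.toEuclideanLin Λ x, x⟫)
    (hKeig : Module.End.HasEigenvalue (Matrix.toEuclideanLin K) lamK)
    (hΛeig : Module.End.HasEigenvalue (Matrix.toEuclideanLin Λ) lamΛ)
    (dm : ℝ) (hdm : 0 ≤ dm)
    -- the position tracking error `pt`, twice continuously differentiable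
    (pt : ℝ → EuclideanSpace ℝ (Fin 3)) (hp : ContDiff ℝ 2 pt)
    -- the time-varying part of the learning error, continuously differentiable with
    -- derivative bounded by `dm`, and the constant bias `ε₀`
    (ε : ℝ → EuclideanSpace ℝ (Fin 3)) (ε₀ : EuclideanSpace ℝ (Fin 3))
    (hε : ContDiff ℝ 1 ε) (hεd : ∀ t ≥ (0:ℝ), ‖deriv ε t‖ ≤ dm)
    -- the integral of the tracking error and the composite variable `s`
    (q s : ℝ → EuclideanSpace ℝ (Fin 3))
    (hq : ∀ t, q t = ∫ τ in (0:ℝ)..t, pt τ)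
    (hs : ∀ t, s t = deriv pt t + (2:ℝ) • Matrix.toEuclideanLin Λ (pt t)
        + Matrix.toEuclideanLin (Λ ^ 2) (q t))
    -- closed-loop dynamics `m ṡ = -K s + ε₀ + ε(t)` for all `t ≥ 0`
    (hdyn : ∀ t ≥ (0:ℝ), m • deriv s t = -(Matrix.toEuclideanLin K (s t)) + ε₀ + ε t) :
    Filter.limsup (fun t => ‖pt t‖) Filter.atTop ≤ dm / (lamΛ ^ 2 * lamK) := by
  classical
  set Lam : EuclideanSpace ℝ (Fin 3) →L[ℝ] EuclideanSpace ℝ (Fin 3) :=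
    LinearMap.toContinuousLinearMap (Matrix.toEuclideanLin Λ) with hLam
  set Kc : EuclideanSpace ℝ (Fin 3) →L[ℝ] EuclideanSpace ℝ (Fin 3) :=
    LinearMap.toContinuousLinearMap (Matrix.toEuclideanLin K) with hKc
  have hLamapp : ∀ y, Lam y = Matrix.toEuclideanLin Λ y := fun y =>
    congrFun (LinearMap.coe_toContinuousLinearMap' _) y
  have hKapp : ∀ y, Kc y = Matrix.toEuclideanLin K y := fun y =>
    congrFun (LinearMap.coe_toContinuousLinearMap' _) y
  -- squared matrix
  have hΛsq : ∀ y, Matrix.toEuclideanLin (Λ ^ 2) y = Lam (Lam y) := by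
    intro y
    simp [hLamapp, Matrix.toEuclideanLin_apply, pow_two, Matrix.mulVec_mulVec]
  -- differentiability of pt
  have hptd : Differentiable ℝ pt := hp.differentiable (by norm_num)
  have hp2 : ContDiff ℝ ((1:ℕ) + 1) pt := by exact_mod_cast hp
  have hp'c : ContDiff ℝ 1 (deriv pt) := (contDiff_succ_iff_deriv.mp hp2).2.2
  have hp'd : Differentiable ℝ (deriv pt) := hp'c.differentiable (by norm_num)
  have hεdiff : Differentiable ℝ ε := hε.differentiable (by norm_num)
  -- derivative of q
  have hq' : ∀ t, HasDerivAt q (pt t) t := by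
    intro t
    have h0 : HasDerivAt (fun u => ∫ τ in (0:ℝ)..u, pt τ) (pt t) t :=
      intervalIntegral.integral_hasDerivAt_right (hptd.continuous.intervalIntegrable _ _)
        (hptd.continuous.stronglyMeasurableAtFilter _ _) hptd.continuous.continuousAt
    have hqe : q = fun u => ∫ τ in (0:ℝ)..u, pt τ := funext hq
    rw [hqe]
    exact h0
  -- the derivative of s
  set v : ℝ → EuclideanSpace ℝ (Fin 3) :=
    fun t => deriv (deriv pt) t + (2:ℝ) • Lam (deriv pt t) + Lam (Lam (pt t)) with hv
  have hs' : ∀ t, HasDerivAt s (v t) t := by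
    intro t
    have hse : s = fun t => deriv pt t + (2:ℝ) • Matrix.toEuclideanLin Λ (pt t)
        + Matrix.toEuclideanLin (Λ ^ 2) (q t) := funext hs
    rw [hse]
    have h1 : HasDerivAt (deriv pt) (deriv (deriv pt) t) t := (hp'd t).hasDerivAt
    have h2 : HasDerivAt (fun u => Lam (pt u)) (Lam (deriv pt t)) t :=
      Lam.hasFDerivAt.comp_hasDerivAt t (hptd t).hasDerivAt
    have h3 := (LinearMap.toContinuousLinearMap
        (Matrix.toEuclideanLin (Λ ^ 2))).hasFDerivAt.comp_hasDerivAt t (hq' t)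
    have h4 := (h1.add (h2.const_smul (2:ℝ))).add h3
    have hval : v t = deriv (deriv pt) t + (2:ℝ) • Lam (deriv pt t)
        + (LinearMap.toContinuousLinearMap (Matrix.toEuclideanLin (Λ ^ 2))) (pt t) := by
      rw [hv]
      simp only [congrFun (LinearMap.coe_toContinuousLinearMap' _) (pt t), hΛsq]
    rw [hval]
    exact (h1.add (h2.const_smul (2:ℝ))).add h3
  have hderiv_s : deriv s = v := funext fun t => (hs' t).deriv
  -- Stage 1 : v satisfies m v' = -K v + ε'
  have hFv : ∀ t, 0 ≤ t → v t = m⁻¹ • (-(Kc (s t)) + ε₀ + ε t) := by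
    intro t ht
    have h0 := hdyn t ht
    rw [hderiv_s] at h0
    rw [hKapp, ← h0, smul_smul, inv_mul_cancel₀ hm.ne', one_smul]
  have hεd' : ∀ t, HasDerivAt ε (deriv ε t) t := fun t => (hεdiff t).hasDerivAt
  have hv' : ∀ᶠ t in atTop, HasDerivAt v (-((m⁻¹ • Kc) (v t)) + m⁻¹ • deriv ε t) t := by
    filter_upwards [eventually_gt_atTop 0] with t ht
    have hFd : HasDerivAt (fun u => m⁻¹ • (-(Kc (s u)) + ε₀ + ε u))
        (m⁻¹ • (-(Kc (v t)) + deriv ε t)) t := by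
      have h1 : HasDerivAt (fun u => Kc (s u)) (Kc (v t)) t :=
        Kc.hasFDerivAt.comp_hasDerivAt t (hs' t)
      have h2 := ((h1.neg.add_const ε₀).add (hεd' t)).const_smul m⁻¹
      exact h2
    have heq : v =ᶠ[nhds t] fun u => m⁻¹ • (-(Kc (s u)) + ε₀ + ε u) := by
      filter_upwards [isOpen_Ioi.mem_nhds ht] with u hu
      exact hFv u (le_of_lt hu)
    have h5 := hFd.congr_of_eventuallyEq heq
    refine h5.congr_deriv ?_
    simp [smul_add, smul_neg]
  -- final assembly
  refine le_of_forall_pos_le_add fun η hη => ?_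
  have hbd : IsBoundedUnder (· ≥ ·) atTop (fun t => ‖pt t‖) :=
    ⟨0, by rw [Filter.eventually_map]; exact Filter.Eventually.of_forall fun t => norm_nonneg _⟩
  refine Filter.limsup_le_of_le hbd.isCoboundedUnder_le ?_
  set δ₁ : ℝ := η * lamΛ ^ 2 / 3 with hδ₁def
  set δ₂ : ℝ := η * lamΛ / 3 with hδ₂def
  set δ₃ : ℝ := η / 3 with hδ₃def
  have hδ₁ : 0 < δ₁ := by positivity
  have hδ₂ : 0 < δ₂ := by positivity
  have hδ₃ : 0 < δ₃ := by positivity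
  -- Stage 1 bound
  have hst1 : ∀ᶠ t in atTop, ‖v t‖ ≤ (m⁻¹ * dm) / (m⁻¹ * lamK) + δ₁ := by
    refine iss_helper _ _ _ (by positivity) (by positivity) hδ₁ v
      (fun t => m⁻¹ • deriv ε t) (m⁻¹ • Kc) ?_ hv' ?_
    · intro y
      rw [ContinuousLinearMap.smul_apply, real_inner_smul_left]
      rw [mul_assoc]
      refine mul_le_mul_of_nonneg_left ?_ (by positivity)
      rw [hKapp]
      exact hKlow y
    · filter_upwards [eventually_ge_atTop 0] with t ht
      rw [norm_smul, Real.norm_eq_abs, abs_of_pos (by positivity)]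
      exact mul_le_mul_of_nonneg_left (hεd t ht) (by positivity)
  -- Stage 2 : w = pt' + Λ pt
  set w : ℝ → EuclideanSpace ℝ (Fin 3) := fun t => deriv pt t + Lam (pt t) with hw
  have hw' : ∀ t, HasDerivAt w (-(Lam (w t)) + v t) t := by
    intro t
    have h1 : HasDerivAt (deriv pt) (deriv (deriv pt) t) t := (hp'd t).hasDerivAt
    have h2 : HasDerivAt (fun u => Lam (pt u)) (Lam (deriv pt t)) t :=
      Lam.hasFDerivAt.comp_hasDerivAt t (hptd t).hasDerivAt
    have h3 := h1.add h2
    have hval : -(Lam (w t)) + v t = deriv (deriv pt) t + Lam (deriv pt t) := by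
      rw [hw, hv]
      simp only [map_add, two_smul]
      abel
    rw [hval]
    exact h3
  have hst2 : ∀ᶠ t in atTop, ‖w t‖ ≤ ((m⁻¹ * dm) / (m⁻¹ * lamK) + δ₁) / lamΛ + δ₂ := by
    refine iss_helper _ _ _ hlamΛ (by positivity) hδ₂ w v Lam ?_
      (Filter.Eventually.of_forall hw') hst1
    intro y
    rw [hLamapp]
    exact hΛlow y
  -- Stage 3 : pt itself
  have hpt' : ∀ t, HasDerivAt pt (-(Lam (pt t)) + w t) t := by
    intro t
    have hval : -(Lam (pt t)) + w t = deriv pt t := by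
      rw [hw]
      dsimp only
      rw [add_comm (deriv pt t)]
      exact neg_add_cancel_left _ _
    rw [hval]
    exact (hptd t).hasDerivAt
  have hst3 : ∀ᶠ t in atTop,
      ‖pt t‖ ≤ (((m⁻¹ * dm) / (m⁻¹ * lamK) + δ₁) / lamΛ + δ₂) / lamΛ + δ₃ := by
    refine iss_helper _ _ _ hlamΛ (by positivity) hδ₃ pt w Lam ?_
      (Filter.Eventually.of_forall hpt') hst2
    intro y
    rw [hLamapp]
    exact hΛlow y
  filter_upwards [hst3] with t ht
  refine ht.trans (le_of_eq ?_)
  rw [mul_div_mul_left _ _ (inv_ne_zero hm.ne'), hδ₁def, hδ₂def, hδ₃def]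
  field_simp
  ring
end

section
/- Let k and n be positive integers and let x_min < x_max be real numbers. A continuous function h : ([x_min, x_max]ⁿ)ᵏ → ℝ is permutation-invariant (i.e., h(x_{π(1)}, …, x_{π(k)}) = h(x₁, …, x_k) for every permutation π of {1, …, k} and all x₁, …, x_k ∈ [x_min, x_max]ⁿ) if and only if there exist a positive integer d and functions φ : [x_min, x_max]ⁿ → ℝᵈ and ρ : ℝᵈ → ℝ such that h(x₁, …, x_k) = ρ(∑_{i=1}^{k} φ(x_i)) for all x₁, …, x_k ∈ [x_min, x_max]ⁿ. -/
open Finset Cardinal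

section DeepSetsAux

private lemma deepSets_exists_li (X : Type) (hX : #X ≤ continuum) :
    ∃ f : X → ℝ, Function.Injective f ∧ LinearIndependent ℚ f := by
  obtain ⟨j⟩ : Nonempty (X ↪ Module.Basis.ofVectorSpaceIndex ℚ ℝ) := by
    rw [← Cardinal.le_def]
    refine hX.trans ?_
    rw [(Module.Basis.ofVectorSpace ℚ ℝ).mk_eq_rank'', Real.rank_rat_real]
  exact ⟨Module.Basis.ofVectorSpace ℚ ℝ ∘ j, (Module.Basis.ofVectorSpace ℚ ℝ).injective.comp j.injective,
    ((Module.Basis.ofVectorSpace ℚ ℝ).linearIndependent).comp j j.injective⟩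

private lemma deepSets_key {X : Type} {k : ℕ} {f : X → ℝ} (hinj : Function.Injective f)
    (hli : LinearIndependent ℚ f) (x y : Fin k → X)
    (hsum : ∑ i, f (x i) = ∑ i, f (y i)) :
    ∃ π : Equiv.Perm (Fin k), x = y ∘ π := by
  classical
  have hc : (∑ i, Finsupp.single (x i) (1:ℚ)) = ∑ i, Finsupp.single (y i) (1:ℚ) := by
    apply hli
    rw [map_sum, map_sum]
    simpa [Finsupp.linearCombination_single] using hsum
  have hcount : ∀ a : X, (univ.filter fun i => x i = a).card
      = (univ.filter fun i => y i = a).card := by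
    intro a
    have := DFunLike.congr_fun hc a
    simp only [Finsupp.finset_sum_apply, Finsupp.single_apply, Finset.sum_boole] at this
    exact_mod_cast this
  have h1 : ∀ (z : Fin k → X) (a : X),
      Multiset.count a (Multiset.map z univ.val) = (univ.filter fun i => z i = a).card := by
    intro z a
    rw [Multiset.count_map]
    rw [Finset.card, Finset.filter_val]
    congr 1
    apply Multiset.filter_congr
    exact fun i _ => eq_comm
  have hms : Multiset.map x univ.val = Multiset.map y univ.val := by
    ext a
    rw [h1, h1, hcount]
  have hperm : (List.ofFn x).Perm (List.ofFn y) := by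
    rw [← Multiset.coe_eq_coe]
    simpa [List.ofFn_eq_map, Fin.univ_def] using hms
  set F := f ∘ x with hF
  set G := f ∘ y with hG
  have hFG : F ∘ Tuple.sort F = G ∘ Tuple.sort G := by
    apply List.ofFn_injective
    have p1 : (List.ofFn (F ∘ Tuple.sort F)).Perm (List.ofFn (G ∘ Tuple.sort G)) :=
      (((Tuple.sort F).ofFn_comp_perm F).trans
        ((List.map_ofFn (f := x) (g := f) ▸ List.map_ofFn (f := y) (g := f) ▸ hperm.map f :
          (List.ofFn F).Perm (List.ofFn G)))).trans
        ((Tuple.sort G).ofFn_comp_perm G).symm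
    exact List.Perm.eq_of_sortedLE (Tuple.monotone_sort F).sortedLE_ofFn
      (Tuple.monotone_sort G).sortedLE_ofFn p1
  have hxy : x ∘ Tuple.sort F = y ∘ Tuple.sort G := by
    funext i
    apply hinj
    exact congrFun hFG i
  refine ⟨(Tuple.sort F)⁻¹.trans (Tuple.sort G), ?_⟩
  funext i
  have := congrFun hxy ((Tuple.sort F)⁻¹ i)
  simpa using this

end DeepSetsAux

/-- Lemma 1 of the paper (adapted from Theorem 7 of Zaheer et al., 'Deep Sets'):
a continuous function `h` of `k` inputs, each in the compact box `[x_min, x_max]ⁿ ⊂ ℝⁿ`,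
is permutation-invariant if and only if it is decomposable as `h(x₁,…,x_k) = ρ(∑ᵢ φ(xᵢ))`
for some latent dimension `d` and functions `φ` and `ρ`. -/
theorem deep_sets_decomposition
    (k n : ℕ) (hk : 0 < k) (hn : 0 < n)
    (xmin xmax : ℝ) (hx : xmin < xmax)
    (h : (Fin k → {x : EuclideanSpace ℝ (Fin n) // ∀ i, x i ∈ Set.Icc xmin xmax}) → ℝ)
    (hcont : Continuous h) :
    (∀ (π : Equiv.Perm (Fin k))
        (x : Fin k → {x : EuclideanSpace ℝ (Fin n) // ∀ i, x i ∈ Set.Icc xmin xmax}),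
      h (x ∘ π) = h x) ↔
    ∃ d : ℕ, 0 < d ∧
      ∃ (φ : {x : EuclideanSpace ℝ (Fin n) // ∀ i, x i ∈ Set.Icc xmin xmax} → (Fin d → ℝ))
        (ρ : (Fin d → ℝ) → ℝ),
        ∀ x : Fin k → {x : EuclideanSpace ℝ (Fin n) // ∀ i, x i ∈ Set.Icc xmin xmax},
          h x = ρ (∑ i, φ (x i)) := by
  have hXcard : #({x : EuclideanSpace ℝ (Fin n) // ∀ i, x i ∈ Set.Icc xmin xmax}) ≤ continuum := by
    refine (Cardinal.mk_subtype_le _).trans ?_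
    have : #(EuclideanSpace ℝ (Fin n)) = #(Fin n → ℝ) := Cardinal.mk_congr (WithLp.equiv 2 _)
    rw [this, Cardinal.mk_arrow]
    simp only [Cardinal.mk_real, Cardinal.mk_fin, Cardinal.lift_natCast, Cardinal.lift_id]
    exact Cardinal.power_nat_le Cardinal.aleph0_le_continuum
  constructor
  · intro hinv
    obtain ⟨f, hinj, hli⟩ := deepSets_exists_li _ hXcard
    have hne : Nonempty {x : EuclideanSpace ℝ (Fin n) // ∀ i, x i ∈ Set.Icc xmin xmax} :=
      ⟨⟨WithLp.toLp 2 (fun _ => xmin : Fin n → ℝ), fun i => ⟨le_refl _, hx.le⟩⟩⟩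
    have hne2 : Nonempty (Fin k → {x : EuclideanSpace ℝ (Fin n) // ∀ i, x i ∈ Set.Icc xmin xmax}) :=
      ⟨fun _ => Classical.arbitrary _⟩
    set S : (Fin k → {x : EuclideanSpace ℝ (Fin n) // ∀ i, x i ∈ Set.Icc xmin xmax}) → ℝ :=
      fun x => ∑ i, f (x i) with hS
    refine ⟨1, one_pos, fun a => fun _ => f a, fun v => h (Function.invFun S (v 0)), ?_⟩
    intro x
    have happ : (∑ i, (fun _ : Fin 1 => f (x i))) 0 = S x := by
      rw [Finset.sum_apply]
    show h x = h (Function.invFun S ((∑ i, fun _ : Fin 1 => f (x i)) 0))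
    rw [happ]
    have hSy : S (Function.invFun S (S x)) = S x := Function.invFun_eq ⟨x, rfl⟩
    obtain ⟨π, hπ⟩ := deepSets_key hinj hli (Function.invFun S (S x)) x hSy
    rw [hπ]
    exact (hinv π x).symm
  · rintro ⟨d, hd, φ, ρ, hdecomp⟩ π x
    rw [hdecomp, hdecomp]
    congr 1
    exact Equiv.sum_comp π fun i => φ (x i)
end
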